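/- arXiv:1009.4371 — 4 statements merged into one kernel-verified Lean document; each statement's English description precedes it below -/
import Mathlib

section
/- Let C be an abelian category and D = D^b(C) its bounded derived category. A strictly full triangulated subcategory D_0 ⊂ D is dense (i.e. every object of D is a direct summand of an object of D_0) if and only if for every object E of C there exists F in D with E ⊕ F in D_0. -/
/-!
STATEMENT 3: Let C be an abelian category and D = D^b(C). A strictly full triangulated
subcategory D₀ ⊂ D is dense iff for every object E of C there exists F ∈ D with
E ⊕ F ∈ D₀.  Since the bounded derived category is not available in Mathlib, `D^b(C)`
is formalized faithfully as a pretriangulated category `D` equipped with a bounded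
t-structure `t` whose heart plays the role of `C` (objects of `C` ⊂ D^b(C) are exactly
the objects of the heart, i.e. those `E` with `t.le 0 E` and `t.ge 0 E`); the statement
and its proof (induction on the length of a complex) take place at this level of
generality.
-/

open CategoryTheory Limits Pretriangulated Triangulated

universe v u

variable (D : Type u) [Category.{v} D] [Preadditive D] [HasZeroObject D]
  [HasShift D ℤ] [∀ n : ℤ, (shiftFunctor D n).Additive] [Pretriangulated D]

namespace Stmt3Aux

variable {D}

/-- There are no nonzero morphisms from an object `≤ a` to an object `≥ b` when `a < b`. -/
lemma hom_zero (t : TStructure D) {a b : ℤ} (hab : a < b) {W Y : D}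
    (hW : t.le a W) (hY : t.ge b Y) (f : W ⟶ Y) : f = 0 := by
  have hW' : t.le 0 (W⟦a⟧) := t.le_shift a a 0 (by omega) W hW
  have hY' : t.ge (b - a) (Y⟦a⟧) := t.ge_shift b a (b - a) (by omega) Y hY
  have hY'' : t.ge 1 (Y⟦a⟧) := t.ge_antitone (by omega) _ hY'
  have h0 : (shiftFunctor D a).map f = 0 := t.zero' _ hW' hY''
  apply (shiftFunctor D a).map_injective
  rw [h0, Functor.map_zero]

/-- The class of objects `≥ b` is closed under extensions. -/
lemma ge_ext₂ (t : TStructure D) {b : ℤ} (T : Triangle D) (hT : T ∈ distTriang D)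
    (h₁ : t.ge b T.obj₁) (h₃ : t.ge b T.obj₃) : t.ge b T.obj₂ := by
  have van : ∀ (W : D), t.le (b - 1) W → ∀ (f : W ⟶ T.obj₂), f = 0 := by
    intro W hW f
    obtain ⟨g, rfl⟩ := T.coyoneda_exact₂ hT f (hom_zero t (by omega) hW h₃ _)
    rw [hom_zero t (by omega) hW h₁ g, zero_comp]
  obtain ⟨A, B, hA, hB, f, g, h, mem⟩ := t.exists_triangle T.obj₂ (b - 1) b (by omega)
  have hf : f = 0 := van A hA f
  have mem' := inv_rot_of_distTriang _ mem
  obtain ⟨ψ, hψ⟩ := Triangle.coyoneda_exact₂ _ mem' (𝟙 A) (by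
    dsimp [Triangle.invRotate]
    simp [hf]
    exact Category.id_comp _)
  have hψ0 : ψ = 0 := hom_zero t (show b - 1 < b + 1 by omega) hA
    (t.ge_shift b (-1) (b + 1) (by omega) B hB) ψ
  have hzero : IsZero A := by
    rw [IsZero.iff_id_eq_zero, hψ, hψ0, zero_comp]
    rfl
  have : IsIso g := by
    have := (Triangle.isZero₁_iff_isIso₂ _ mem).1 hzero
    exact this
  exact ObjectProperty.prop_of_iso (t.ge b) (asIso g).symm hB

/-- The class of objects `≤ a` is closed under extensions. -/
lemma le_ext₂ (t : TStructure D) {a : ℤ} (T : Triangle D) (hT : T ∈ distTriang D)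
    (h₁ : t.le a T.obj₁) (h₃ : t.le a T.obj₃) : t.le a T.obj₂ := by
  have van : ∀ (W : D), t.ge (a + 1) W → ∀ (f : T.obj₂ ⟶ W), f = 0 := by
    intro W hW f
    obtain ⟨g, rfl⟩ := T.yoneda_exact₂ hT f (hom_zero t (by omega) h₁ hW _)
    rw [hom_zero t (by omega) h₃ hW g, comp_zero]
  obtain ⟨A, B, hA, hB, f, g, h, mem⟩ := t.exists_triangle T.obj₂ a (a + 1) rfl
  have hg : g = 0 := van B hB g
  have mem' := rot_of_distTriang _ mem
  obtain ⟨ψ, hψ⟩ := Triangle.yoneda_exact₂ _ mem' (𝟙 B) (by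
    dsimp [Triangle.rotate]
    simp [hg]
    exact Category.comp_id _)
  have hψ0 : ψ = 0 := hom_zero t (show a - 1 < a + 1 by omega)
    (t.le_shift a 1 (a - 1) (by omega) A hA) hB ψ
  have hzero : IsZero B := by
    rw [IsZero.iff_id_eq_zero, hψ, hψ0, comp_zero]
    rfl
  have : IsIso f := by
    have := (Triangle.isZero₃_iff_isIso₁ _ mem).1 hzero
    exact this
  exact ObjectProperty.prop_of_iso (t.le a) (asIso f) hA

/-- The product of a `Bool`-indexed family is a binary biproduct. -/
noncomputable def prodBoolIso (f : Bool → D) [HasProduct f] :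
    (∏ᶜ f) ≅ f false ⊞ f true where
  hom := biprod.lift (Pi.π f false) (Pi.π f true)
  inv := Pi.lift (fun b => Bool.rec biprod.fst biprod.snd b)
  hom_inv_id := by
    apply Pi.hom_ext
    rintro (_ | _) <;> simp
  inv_hom_id := by ext <;> simp

/-- If a triangulated subcategory contains `T₁.obj₁ ⊞ T₂.obj₁` and `T₁.obj₃ ⊞ T₂.obj₃`
for distinguished triangles `T₁`, `T₂`, then it contains `T₁.obj₂ ⊞ T₂.obj₂`. -/
lemma sum_mem (D₀ : ObjectProperty D) [D₀.IsTriangulated] [D₀.IsClosedUnderIsomorphisms]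
    {T₁ T₂ : Triangle D} (h₁ : T₁ ∈ distTriang D) (h₂ : T₂ ∈ distTriang D)
    (m₁ : D₀ (T₁.obj₁ ⊞ T₂.obj₁)) (m₃ : D₀ (T₁.obj₃ ⊞ T₂.obj₃)) :
    D₀ (T₁.obj₂ ⊞ T₂.obj₂) := by
  let f : Bool → Triangle D := fun b => bif b then T₂ else T₁
  have hd : productTriangle f ∈ distTriang D :=
    productTriangle_distinguished f (by rintro (_ | _) <;> assumption)
  have e₁ : (productTriangle f).obj₁ ≅ T₁.obj₁ ⊞ T₂.obj₁ :=
    prodBoolIso (fun b => (f b).obj₁)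
  have e₂ : (productTriangle f).obj₂ ≅ T₁.obj₂ ⊞ T₂.obj₂ :=
    prodBoolIso (fun b => (f b).obj₂)
  have e₃ : (productTriangle f).obj₃ ≅ T₁.obj₃ ⊞ T₂.obj₃ :=
    prodBoolIso (fun b => (f b).obj₃)
  exact ObjectProperty.prop_of_iso D₀ e₂
    (D₀.ext_of_isTriangulatedClosed₂ _ hd (ObjectProperty.prop_of_iso D₀ e₁.symm m₁) (ObjectProperty.prop_of_iso D₀ e₃.symm m₃))

/-- The single-degree case: objects concentrated in one degree. -/
lemma single_mem (t : TStructure D) (D₀ : ObjectProperty D) [D₀.IsTriangulated] [D₀.IsClosedUnderIsomorphisms]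
    (hh : ∀ E : D, t.le 0 E → t.ge 0 E → ∃ F : D, D₀ (E ⊞ F))
    (n : ℤ) (X : D) (hLE : t.le n X) (hGE : t.ge n X) : ∃ F : D, D₀ (X ⊞ F) := by
  obtain ⟨F, hF⟩ := hh (X⟦n⟧) (t.le_shift n n 0 (by omega) X hLE)
    (t.ge_shift n n 0 (by omega) X hGE)
  refine ⟨F⟦(-n : ℤ)⟧, ?_⟩
  have hshift : D₀ ((X⟦n⟧ ⊞ F)⟦(-n : ℤ)⟧) := D₀.le_shift (-n) _ hF
  have : PreservesBinaryBiproducts (shiftFunctor D (-n : ℤ)) :=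
    preservesBinaryBiproducts_of_preservesBiproducts _
  exact ObjectProperty.prop_of_iso D₀
    ((shiftFunctor D (-n : ℤ)).mapBiprod (X⟦n⟧) F ≪≫
      biprod.mapIso ((shiftEquiv D n).unitIso.symm.app X) (Iso.refl _)) hshift

/-- The key induction on the "length" of an object. -/
lemma key (t : TStructure D) (D₀ : ObjectProperty D) [D₀.IsTriangulated] [D₀.IsClosedUnderIsomorphisms]
    (hh : ∀ E : D, t.le 0 E → t.ge 0 E → ∃ F : D, D₀ (E ⊞ F)) :
    ∀ (k : ℕ) (X : D) (a b : ℤ), a - b ≤ k → t.le a X → t.ge b X →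
      ∃ F : D, D₀ (X ⊞ F) := by
  intro k
  induction k with
  | zero =>
    intro X a b hab hLE hGE
    exact single_mem t D₀ hh b X (t.le_monotone (by omega) _ hLE) hGE
  | succ k ih =>
    intro X a b hab hLE hGE
    by_cases hba : a ≤ b
    · exact single_mem t D₀ hh b X (t.le_monotone hba _ hLE) hGE
    · obtain ⟨A, B, hA, hB, f, g, h, mem⟩ := t.exists_triangle X (a - 1) a (by omega)
      -- A is ≥ b, using closure of `≥ b` under extensions
      have hAge : t.ge b A := by
        have := ge_ext₂ t _ (inv_rot_of_distTriang _ mem)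
          (t.ge_antitone (show b ≤ a + 1 by omega) _
            (t.ge_shift a (-1) (a + 1) (by omega) B hB)) hGE
        exact this
      -- B is ≤ a, using closure of `≤ a` under extensions
      have hBle : t.le a B := by
        have := le_ext₂ t _ (rot_of_distTriang _ mem) hLE
          (t.le_monotone (show a - 2 ≤ a by omega) _
            (t.le_shift (a - 1) 1 (a - 2) (by omega) A hA))
        exact this
      obtain ⟨F₁, hF₁⟩ := ih A (a - 1) b (by omega) hA hAge
      obtain ⟨F₂, hF₂⟩ := single_mem t D₀ hh a B hBle hB
      exact ⟨F₁ ⊞ F₂, sum_mem D₀ mem (binaryBiproductTriangle_distinguished F₁ F₂) hF₁ hF₂⟩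

end Stmt3Aux

theorem stmt3 (t : TStructure D)
    (hbounded : ∀ X : D, ∃ n : ℕ, t.le n X ∧ t.ge (-(n : ℤ)) X)
    (D₀ : ObjectProperty D) [D₀.IsTriangulated] [D₀.IsClosedUnderIsomorphisms] :
    (∀ E : D, ∃ F : D, D₀ (E ⊞ F)) ↔
      (∀ E : D, t.le 0 E → t.ge 0 E → ∃ F : D, D₀ (E ⊞ F)) := by
  constructor
  · intro h E _ _
    exact h E
  · intro hh X
    obtain ⟨n, hLE, hGE⟩ := hbounded X
    exact Stmt3Aux.key t D₀ hh (2 * n) X n (-(n : ℤ)) (by push_cast; omega) hLE hGE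
end

section
/- (Thomason's classification) Let D be an essentially small triangulated category with Grothendieck group K(D). The assignment sending a strictly full dense triangulated subcategory D_0 ⊂ D to the image of K(D_0) → K(D) is a bijection between the set of strictly full dense triangulated subcategories of D and the set of subgroups of K(D); the inverse sends a subgroup H ⊂ K(D) to the full subcategory D_H of objects E with class [E] ∈ H. -/
/-!
STATEMENT 5 (Thomason): For an essentially small triangulated category D, sending a
strictly full dense triangulated subcategory D₀ to the image of K(D₀) → K(D) is a
bijection onto the set of subgroups of K(D); the inverse sends a subgroup H to the
full subcategory of objects E with [E] ∈ H.
-/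

open CategoryTheory Limits Pretriangulated
open ZeroObject

universe v u

variable (C : Type u) [Category.{v} C] [Preadditive C] [HasZeroObject C]
  [HasShift C ℤ] [∀ n : ℤ, (shiftFunctor C n).Additive] [Pretriangulated C]

namespace Triangulated

/-- Mathlib's former `Triangulated.Subcategory` (removed since), with its old definition. -/
structure Subcategory where
  P : C → Prop
  zero' : ∃ (Z : C) (_ : IsZero Z), P Z
  shift (X : C) (n : ℤ) : P X → P (X⟦n⟧)
  ext₂' (T : Triangle C) (_ : T ∈ distTriang C) : P T.obj₁ → P T.obj₃ →
    ObjectProperty.isoClosure P T.obj₂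

end Triangulated

/-- The subgroup of relations defining the Grothendieck group of a triangulated
category: `[B] = [A] + [C]` for every distinguished triangle `A → B → C`. -/
def K0Relations : AddSubgroup (FreeAbelianGroup C) :=
  AddSubgroup.closure {x | ∃ T : Triangle C, (T ∈ distTriang C) ∧
    x = FreeAbelianGroup.of T.obj₂ - FreeAbelianGroup.of T.obj₁ - FreeAbelianGroup.of T.obj₃}

/-- The Grothendieck group `K(D)` of a triangulated category. -/
def K0 : Type u := FreeAbelianGroup C ⧸ K0Relations C

instance : AddCommGroup (K0 C) :=
  inferInstanceAs (AddCommGroup (FreeAbelianGroup C ⧸ K0Relations C))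

/-- The class `[X]` of an object in the Grothendieck group. -/
def K0.cls (X : C) : K0 C := QuotientAddGroup.mk' (K0Relations C) (FreeAbelianGroup.of X)

/-- Relations for the Grothendieck group of a (strictly full) triangulated subcategory
`S`: distinguished triangles of `D` with all three vertices in `S`. -/
def K0SubRelations (S : Triangulated.Subcategory C) :
    AddSubgroup (FreeAbelianGroup {X : C // S.P X}) :=
  AddSubgroup.closure {x | ∃ (T : Triangle C) (_ : T ∈ distTriang C)
    (h₁ : S.P T.obj₁) (h₂ : S.P T.obj₂) (h₃ : S.P T.obj₃),
    x = FreeAbelianGroup.of ⟨T.obj₂, h₂⟩ - FreeAbelianGroup.of ⟨T.obj₁, h₁⟩ -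
      FreeAbelianGroup.of ⟨T.obj₃, h₃⟩}

/-- The Grothendieck group `K(D₀)` of a (strictly full) triangulated subcategory. -/
def K0Sub (S : Triangulated.Subcategory C) : Type u :=
  FreeAbelianGroup {X : C // S.P X} ⧸ K0SubRelations C S

instance (S : Triangulated.Subcategory C) : AddCommGroup (K0Sub C S) :=
  inferInstanceAs (AddCommGroup (FreeAbelianGroup {X : C // S.P X} ⧸ K0SubRelations C S))

/-- The natural map `K(D₀) → K(D)` on Grothendieck groups induced by the inclusion of a
triangulated subcategory. -/
def K0.ofSub (S : Triangulated.Subcategory C) : K0Sub C S →+ K0 C :=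
  QuotientAddGroup.lift _ (FreeAbelianGroup.lift fun X : {X : C // S.P X} => K0.cls C X.1)
    (by
      intro x hx
      have hle : K0SubRelations C S ≤
          (FreeAbelianGroup.lift fun X : {X : C // S.P X} => K0.cls C X.1).ker := by
        rw [K0SubRelations, AddSubgroup.closure_le]
        rintro y ⟨T, hT, h₁, h₂, h₃, rfl⟩
        simp only [SetLike.mem_coe, AddMonoidHom.mem_ker, map_sub,
          FreeAbelianGroup.lift_apply_of]
        show K0.cls C T.obj₂ - K0.cls C T.obj₁ - K0.cls C T.obj₃ = 0
        simp only [K0.cls, ← map_sub, QuotientAddGroup.mk'_apply]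
        exact (QuotientAddGroup.eq_zero_iff _).2
          (AddSubgroup.subset_closure ⟨T, hT, rfl⟩)
      exact hle hx)

section SubcatAux

variable {C}

namespace Triangulated.Subcategory

variable (S : Triangulated.Subcategory C)

lemma zero [ObjectProperty.IsClosedUnderIsomorphisms S.P] : S.P 0 := by
  obtain ⟨X, hX, mem⟩ := S.zero'
  exact ObjectProperty.prop_of_iso _ hX.isoZero mem

lemma ext₂ [ObjectProperty.IsClosedUnderIsomorphisms S.P] (T : Triangle C)
    (hT : T ∈ distTriang C) (h₁ : S.P T.obj₁) (h₃ : S.P T.obj₃) : S.P T.obj₂ := by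
  simpa only [ObjectProperty.isoClosure_eq_self] using S.ext₂' T hT h₁ h₃

lemma ext₃ [ObjectProperty.IsClosedUnderIsomorphisms S.P] (T : Triangle C)
    (hT : T ∈ distTriang C) (h₁ : S.P T.obj₁) (h₂ : S.P T.obj₂) : S.P T.obj₃ :=
  S.ext₂ _ (rot_of_distTriang _ hT) h₂ (S.shift _ 1 h₁)

/-- Constructor for subcategories given by a property closed under extensions. -/
def mk' (P : C → Prop) (zero : P 0) (shift : ∀ (X : C) (n : ℤ), P X → P (X⟦n⟧))
    (ext₂ : ∀ (T : Triangle C) (_ : T ∈ distTriang C), P T.obj₁ → P T.obj₃ → P T.obj₂) :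
    Triangulated.Subcategory C where
  P := P
  zero' := ⟨0, isZero_zero _, zero⟩
  shift := shift
  ext₂' T hT h₁ h₃ := ObjectProperty.le_isoClosure (P := P) _ (ext₂ T hT h₁ h₃)

instance (P : C → Prop) (zero : P 0) (shift : ∀ (X : C) (n : ℤ), P X → P (X⟦n⟧))
    (ext₂ : ∀ (T : Triangle C) (_ : T ∈ distTriang C), P T.obj₁ → P T.obj₃ → P T.obj₂) :
    ObjectProperty.IsClosedUnderIsomorphisms (mk' P zero shift ext₂).P where
  of_iso {X Y} e hX := by
    refine ext₂ (Triangle.mk e.hom (0 : Y ⟶ 0) 0) ?_ hX zero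
    exact isomorphic_distinguished _ (contractible_distinguished X) _
      (Triangle.isoMk _ _ (Iso.refl _) e.symm (Iso.refl _)
        (e.hom_inv_id.trans (Category.comp_id _).symm) (zero_comp.trans comp_zero.symm)
        (zero_comp.trans comp_zero.symm))

end Triangulated.Subcategory

end SubcatAux

/-! ### Auxiliary material -/

section Aux

noncomputable section

/-- Swap the second and third summands of an (associated) triple biproduct. -/
def swIso (X U W : C) : (X ⊞ U) ⊞ W ≅ (X ⊞ W) ⊞ U :=
  biprod.associator X U W ≪≫ biprod.mapIso (Iso.refl X) (biprod.braiding U W) ≪≫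
    (biprod.associator X W U).symm

/-- Middle four exchange for biproducts. -/
def exchIso (X Y U V : C) : (X ⊞ Y) ⊞ (U ⊞ V) ≅ (X ⊞ U) ⊞ (Y ⊞ V) :=
  (biprod.associator (X ⊞ Y) U V).symm ≪≫ biprod.mapIso (swIso C X Y U) (Iso.refl V) ≪≫
    biprod.associator (X ⊞ U) Y V

/-- `X ⊞ 0 ≅ X`. -/
def biprodZeroIso (X : C) : X ⊞ (0 : C) ≅ X :=
  biprod.braiding X 0 ≪≫ (isoZeroBiprod (isZero_zero C)).symm

/-- The shuffle used in the key lemma. -/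
def shuffleIso (P Q R₁ R₂ : C) : P ⊞ ((Q ⊞ R₁) ⊞ R₂) ≅ Q ⊞ ((P ⊞ R₁) ⊞ R₂) :=
  biprod.mapIso (Iso.refl P) (biprod.associator Q R₁ R₂) ≪≫
    (biprod.associator P Q (R₁ ⊞ R₂)).symm ≪≫
    biprod.mapIso (biprod.braiding P Q) (Iso.refl (R₁ ⊞ R₂)) ≪≫
    biprod.associator Q P (R₁ ⊞ R₂) ≪≫
    biprod.mapIso (Iso.refl Q) (biprod.associator P R₁ R₂).symm

/-- An additive functor preserves binary biproducts. -/
def shiftBiprodIso (X Y : C) (n : ℤ) : (X ⊞ Y)⟦n⟧ ≅ X⟦n⟧ ⊞ Y⟦n⟧ := by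
  haveI := preservesBinaryBiproduct_of_preservesBiproduct (shiftFunctor C n) X Y
  exact Functor.mapBiprod _ X Y

/-- Products over `Bool` are binary biproducts. -/
def piBoolIso (G : Bool → C) : (∏ᶜ G) ≅ G true ⊞ G false where
  hom := biprod.lift (Pi.π G true) (Pi.π G false)
  inv := Pi.lift (fun b => Bool.rec biprod.snd biprod.fst b)
  hom_inv_id := by ext (_|_) <;> simp
  inv_hom_id := by ext <;> simp

end

/-! ### Basic lemmas about `K0` -/

lemma K0.cls_eq_add (T : Triangle C) (hT : T ∈ distTriang C) :
    K0.cls C T.obj₂ = K0.cls C T.obj₁ + K0.cls C T.obj₃ := by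
  rw [← sub_eq_zero]
  have h : K0.cls C T.obj₂ - (K0.cls C T.obj₁ + K0.cls C T.obj₃)
      = QuotientAddGroup.mk' (K0Relations C)
          (FreeAbelianGroup.of T.obj₂ - FreeAbelianGroup.of T.obj₁ -
            FreeAbelianGroup.of T.obj₃) := by
    simp only [K0.cls, map_sub, map_add, sub_sub]
    rfl
  rw [h, QuotientAddGroup.mk'_apply]
  exact (QuotientAddGroup.eq_zero_iff _).2
    (AddSubgroup.subset_closure ⟨T, hT, rfl⟩)

lemma K0.cls_zero : K0.cls C (0 : C) = 0 :=
  left_eq_add.1 (K0.cls_eq_add C _ (contractible_distinguished (0 : C)))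

lemma K0.cls_iso {X Y : C} (e : X ≅ Y) : K0.cls C X = K0.cls C Y := by
  have h : Triangle.mk e.hom (0 : Y ⟶ 0) 0 ∈ distTriang C := by
    refine isomorphic_distinguished _ (contractible_distinguished X) _ ?_
    exact Triangle.isoMk _ _ (Iso.refl _) e.symm (Iso.refl _) (e.hom_inv_id.trans (Category.comp_id _).symm)
      (zero_comp.trans comp_zero.symm)
      (zero_comp.trans comp_zero.symm)
  have := K0.cls_eq_add C _ h
  simp only [Triangle.mk_obj₁, Triangle.mk_obj₂, Triangle.mk_obj₃, K0.cls_zero,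
    add_zero] at this
  exact this.symm

lemma K0.cls_biprod (X Y : C) : K0.cls C (X ⊞ Y) = K0.cls C X + K0.cls C Y :=
  K0.cls_eq_add C _ (binaryBiproductTriangle_distinguished X Y)

lemma K0.cls_shift (X : C) : K0.cls C (X⟦(1 : ℤ)⟧) = - K0.cls C X := by
  have := K0.cls_eq_add C _ (rot_of_distTriang _ (contractible_distinguished X))
  rw [show (contractibleTriangle X).rotate.obj₂ = 0 from rfl, K0.cls_zero] at this
  exact (eq_neg_of_add_eq_zero_right this.symm)

lemma K0.cls_surjective (g : K0 C) : ∃ X : C, K0.cls C X = g := by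
  obtain ⟨x, rfl⟩ := QuotientAddGroup.mk'_surjective (K0Relations C) g
  induction x using FreeAbelianGroup.induction_on with
  | zero => exact ⟨0, by rw [map_zero, K0.cls_zero]; rfl⟩
  | of x => exact ⟨x, rfl⟩
  | neg x _ =>
      refine ⟨x⟦(1 : ℤ)⟧, ?_⟩
      rw [K0.cls_shift, map_neg]
      rfl
  | add x y hx hy =>
      obtain ⟨X, hX⟩ := hx
      obtain ⟨Y, hY⟩ := hy
      exact ⟨X ⊞ Y, by rw [K0.cls_biprod, hX, hY, map_add]; rfl⟩

end Aux

/-! ### Dense triangulated subcategories -/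

section Dense

variable {C}

/-- The type of strictly full dense triangulated subcategories. -/
abbrev DenseSub := {S : Triangulated.Subcategory C //
  ObjectProperty.IsClosedUnderIsomorphisms S.P ∧ ∀ X : C, ∃ Y : C, S.P (X ⊞ Y)}

instance (S : DenseSub (C := C)) : ObjectProperty.IsClosedUnderIsomorphisms S.1.P := S.2.1

lemma DenseSub.biprod_mem (S : DenseSub (C := C)) {X Y : C} (hX : S.1.P X) (hY : S.1.P Y) :
    S.1.P (X ⊞ Y) :=
  S.1.ext₂ _ (binaryBiproductTriangle_distinguished X Y) hX hY

/-- The direct sum of two distinguished triangles is distinguished (up to isomorphism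
on the three objects, which suffices for our purposes). -/
lemma exists_sum_triangle (T₁ T₂ : Triangle C) (h₁ : T₁ ∈ distTriang C)
    (h₂ : T₂ ∈ distTriang C) :
    ∃ T ∈ distTriang C, Nonempty (T.obj₁ ≅ T₁.obj₁ ⊞ T₂.obj₁) ∧
      Nonempty (T.obj₂ ≅ T₁.obj₂ ⊞ T₂.obj₂) ∧ Nonempty (T.obj₃ ≅ T₁.obj₃ ⊞ T₂.obj₃) := by
  let F : Bool → Triangle C := fun b => Bool.rec T₂ T₁ b
  have hF : ∀ b, F b ∈ distTriang C := by rintro (_ | _) <;> assumption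
  exact ⟨productTriangle F, productTriangle_distinguished F hF,
    ⟨piBoolIso C (fun b => (F b).obj₁)⟩, ⟨piBoolIso C (fun b => (F b).obj₂)⟩,
    ⟨piBoolIso C (fun b => (F b).obj₃)⟩⟩

lemma mid_mem (S : DenseSub (C := C)) (T : Triangle C) (hT : T ∈ distTriang C) {A' C' : C}
    (hA : S.1.P (T.obj₁ ⊞ A')) (hC : S.1.P (T.obj₃ ⊞ C')) :
    S.1.P ((T.obj₂ ⊞ A') ⊞ C') := by
  obtain ⟨T', hT', ⟨e₁⟩, ⟨e₂⟩, ⟨e₃⟩⟩ := exists_sum_triangle T (contractibleTriangle A') hT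
    (contractible_distinguished A')
  obtain ⟨T'', hT'', ⟨f₁⟩, ⟨f₂⟩, ⟨f₃⟩⟩ := exists_sum_triangle T'
    (binaryBiproductTriangle (0 : C) C') hT' (binaryBiproductTriangle_distinguished (0 : C) C')
  have m₁ : S.1.P T''.obj₁ :=
    ObjectProperty.prop_of_iso _ (f₁ ≪≫ biprod.mapIso e₁ (Iso.refl _) ≪≫ biprodZeroIso C _).symm hA
  have m₃ : S.1.P T''.obj₃ :=
    ObjectProperty.prop_of_iso _ (f₃ ≪≫ biprod.mapIso (e₃ ≪≫ biprodZeroIso C _) (Iso.refl _)).symm hC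
  have m₂ : S.1.P T''.obj₂ := S.1.ext₂ T'' hT'' m₁ m₃
  exact ObjectProperty.prop_of_iso _ (f₂ ≪≫ biprod.mapIso e₂ ((isoZeroBiprod (isZero_zero C)).symm)) m₂

lemma shift_self_mem (S : DenseSub (C := C)) (X : C) : S.1.P (X ⊞ X⟦(1 : ℤ)⟧) := by
  obtain ⟨A', hA⟩ := S.2.2 X
  obtain ⟨C', hC⟩ := S.2.2 (X⟦(1 : ℤ)⟧)
  have h0 : S.1.P ((((0 : C) ⊞ A') ⊞ C')) :=
    mid_mem S _ (rot_of_distTriang _ (contractible_distinguished X)) hA hC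
  have hAC : S.1.P (A' ⊞ C') :=
    ObjectProperty.prop_of_iso _ (biprod.mapIso ((isoZeroBiprod (isZero_zero C)).symm) (Iso.refl C')) h0
  have hmid : S.1.P (((X ⊞ X⟦(1 : ℤ)⟧) ⊞ A') ⊞ C') :=
    mid_mem S _ (binaryBiproductTriangle_distinguished X (X⟦(1 : ℤ)⟧)) hA hC
  refine S.1.ext₃ _ (binaryBiproductTriangle_distinguished (A' ⊞ C') (X ⊞ X⟦(1 : ℤ)⟧)) hAC ?_
  exact ObjectProperty.prop_of_iso _
    (biprod.associator (X ⊞ X⟦(1 : ℤ)⟧) A' C' ≪≫ biprod.braiding _ _) hmid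

lemma step4 (S : DenseSub (C := C)) (T : Triangle C) (hT : T ∈ distTriang C) :
    ∃ U V : C, S.1.P U ∧ S.1.P V ∧
      Nonempty (T.obj₂ ⊞ U ≅ (T.obj₁ ⊞ T.obj₃) ⊞ V) := by
  obtain ⟨A', hA⟩ := S.2.2 T.obj₁
  obtain ⟨C', hC⟩ := S.2.2 T.obj₃
  have hV : S.1.P ((T.obj₂ ⊞ A') ⊞ C') := mid_mem S T hT hA hC
  have hU : S.1.P (((T.obj₁ ⊞ T.obj₃) ⊞ A') ⊞ C') :=
    mid_mem S _ (binaryBiproductTriangle_distinguished T.obj₁ T.obj₃) hA hC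
  exact ⟨_, _, hU, hV, ⟨shuffleIso C T.obj₂ (T.obj₁ ⊞ T.obj₃) A' C'⟩⟩

end Dense

/-! ### The Thomason monoid/group `M` -/

section M

variable {C}
variable (S : DenseSub (C := C))

/-- Stable isomorphism relation modulo the dense subcategory `S`. -/
def Mrel (X Y : C) : Prop :=
  ∃ U V : C, S.1.P U ∧ S.1.P V ∧ Nonempty (X ⊞ U ≅ Y ⊞ V)

lemma Mrel.of_iso {X Y : C} (e : X ≅ Y) : Mrel S X Y :=
  ⟨0, 0, S.1.zero, S.1.zero, ⟨biprod.mapIso e (Iso.refl 0)⟩⟩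

lemma Mrel.refl (X : C) : Mrel S X X := Mrel.of_iso S (Iso.refl X)

lemma Mrel.symm {X Y : C} (h : Mrel S X Y) : Mrel S Y X := by
  obtain ⟨U, V, hU, hV, ⟨e⟩⟩ := h
  exact ⟨V, U, hV, hU, ⟨e.symm⟩⟩

lemma Mrel.trans {X Y Z : C} (h : Mrel S X Y) (h' : Mrel S Y Z) : Mrel S X Z := by
  obtain ⟨U, V, hU, hV, ⟨e⟩⟩ := h
  obtain ⟨U', V', hU', hV', ⟨f⟩⟩ := h'
  refine ⟨U ⊞ U', V' ⊞ V, S.biprod_mem hU hU', S.biprod_mem hV' hV, ⟨?_⟩⟩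
  calc X ⊞ (U ⊞ U') ≅ (X ⊞ U) ⊞ U' := (biprod.associator _ _ _).symm
    _ ≅ (Y ⊞ V) ⊞ U' := biprod.mapIso e (Iso.refl _)
    _ ≅ (Y ⊞ U') ⊞ V := swIso C Y V U'
    _ ≅ (Z ⊞ V') ⊞ V := biprod.mapIso f (Iso.refl _)
    _ ≅ Z ⊞ (V' ⊞ V) := biprod.associator _ _ _

lemma Mrel.add {X Y X' Y' : C} (h : Mrel S X Y) (h' : Mrel S X' Y') :
    Mrel S (X ⊞ X') (Y ⊞ Y') := by
  obtain ⟨U, V, hU, hV, ⟨e⟩⟩ := h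
  obtain ⟨U', V', hU', hV', ⟨f⟩⟩ := h'
  refine ⟨U ⊞ U', V ⊞ V', S.biprod_mem hU hU', S.biprod_mem hV hV', ⟨?_⟩⟩
  calc (X ⊞ X') ⊞ (U ⊞ U') ≅ (X ⊞ U) ⊞ (X' ⊞ U') := exchIso C X X' U U'
    _ ≅ (Y ⊞ V) ⊞ (Y' ⊞ V') := biprod.mapIso e f
    _ ≅ (Y ⊞ Y') ⊞ (V ⊞ V') := (exchIso C Y Y' V V').symm

lemma Mrel.shift {X Y : C} (h : Mrel S X Y) :
    Mrel S (X⟦(1 : ℤ)⟧) (Y⟦(1 : ℤ)⟧) := by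
  obtain ⟨U, V, hU, hV, ⟨e⟩⟩ := h
  refine ⟨U⟦(1 : ℤ)⟧, V⟦(1 : ℤ)⟧, S.1.shift U 1 hU, S.1.shift V 1 hV, ⟨?_⟩⟩
  calc X⟦(1 : ℤ)⟧ ⊞ U⟦(1 : ℤ)⟧ ≅ (X ⊞ U)⟦(1 : ℤ)⟧ := (shiftBiprodIso C X U 1).symm
    _ ≅ (Y ⊞ V)⟦(1 : ℤ)⟧ := (shiftFunctor C (1 : ℤ)).mapIso e
    _ ≅ Y⟦(1 : ℤ)⟧ ⊞ V⟦(1 : ℤ)⟧ := shiftBiprodIso C Y V 1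

lemma Mrel.zero_of_mem {X : C} (h : S.1.P X) : Mrel S X 0 :=
  ⟨0, X, S.1.zero, h, ⟨biprod.braiding X 0⟩⟩

/-- The setoid given by stable isomorphism. -/
def Msetoid : Setoid C := ⟨Mrel S, ⟨Mrel.refl S, Mrel.symm S, Mrel.trans S⟩⟩

/-- The group of stable isomorphism classes. -/
def M : Type u := Quotient (Msetoid S)

/-- Class of an object in `M`. -/
def mcls (X : C) : M S := Quotient.mk (Msetoid S) X

noncomputable instance : Zero (M S) := ⟨mcls S 0⟩

noncomputable instance : Add (M S) :=
  ⟨fun a b => Quotient.map₂ (· ⊞ ·) (fun _ _ h _ _ h' => Mrel.add S h h') a b⟩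

noncomputable instance : Neg (M S) :=
  ⟨fun a => Quotient.map (·⟦(1 : ℤ)⟧) (fun _ _ h => Mrel.shift S h) a⟩

noncomputable instance : AddCommGroup (M S) where
  add := (· + ·)
  zero := 0
  neg := Neg.neg
  nsmul := nsmulRec
  zsmul := zsmulRec
  add_assoc a b c := by
    induction a using Quotient.ind
    induction b using Quotient.ind
    induction c using Quotient.ind
    exact Quotient.sound (Mrel.of_iso S (biprod.associator _ _ _))
  zero_add a := by
    induction a using Quotient.ind
    exact Quotient.sound (Mrel.of_iso S ((isoZeroBiprod (isZero_zero C)).symm))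
  add_zero a := by
    induction a using Quotient.ind
    exact Quotient.sound (Mrel.of_iso S (biprodZeroIso C _))
  add_comm a b := by
    induction a using Quotient.ind
    induction b using Quotient.ind
    exact Quotient.sound (Mrel.of_iso S (biprod.braiding _ _))
  neg_add_cancel a := by
    induction a using Quotient.ind
    refine Quotient.sound (Mrel.trans S (Mrel.of_iso S (biprod.braiding _ _))
      (Mrel.zero_of_mem S (shift_self_mem S _)))

lemma mcls_add (X Y : C) : mcls S (X ⊞ Y) = mcls S X + mcls S Y := rfl

/-- The canonical homomorphism `K(D) → M`. -/
noncomputable def kappa : K0 C →+ M S :=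
  QuotientAddGroup.lift _ (FreeAbelianGroup.lift (mcls S)) (by
    intro x hx
    have hle : K0Relations C ≤ (FreeAbelianGroup.lift (mcls S)).ker := by
      rw [K0Relations, AddSubgroup.closure_le]
      rintro y ⟨T, hT, rfl⟩
      simp only [SetLike.mem_coe, AddMonoidHom.mem_ker, map_sub, FreeAbelianGroup.lift_apply_of]
      rw [sub_sub, sub_eq_zero, ← mcls_add]
      obtain ⟨U, V, hU, hV, ⟨e⟩⟩ := step4 S T hT
      exact Quotient.sound ⟨U, V, hU, hV, ⟨e⟩⟩
    exact hle hx)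

lemma kappa_cls (X : C) : kappa S (K0.cls C X) = mcls S X :=
  FreeAbelianGroup.lift_apply_of (mcls S) X

end M

/-! ### The key lemma -/

section Key

variable {C}

lemma ofSub_cls (S : Triangulated.Subcategory C) (x : {X : C // S.P X}) :
    K0.ofSub C S (QuotientAddGroup.mk' (K0SubRelations C S) (FreeAbelianGroup.of x)) =
      K0.cls C x.1 :=
  FreeAbelianGroup.lift_apply_of (fun X : {X : C // S.P X} => K0.cls C X.1) x

lemma ofSub_repr (S : DenseSub (C := C)) (g : K0Sub C S.1) :
    ∃ W : C, S.1.P W ∧ K0.ofSub C S.1 g = K0.cls C W := by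
  obtain ⟨x, rfl⟩ := QuotientAddGroup.mk'_surjective (K0SubRelations C S.1) g
  induction x using FreeAbelianGroup.induction_on with
  | zero => exact ⟨0, S.1.zero, by rw [map_zero]; exact (map_zero (K0.ofSub C S.1)).trans (K0.cls_zero C).symm⟩
  | of x => exact ⟨x.1, x.2, ofSub_cls S.1 x⟩
  | neg x _ =>
      refine ⟨x.1⟦(1 : ℤ)⟧, S.1.shift x.1 1 x.2, ?_⟩
      rw [map_neg]; exact (map_neg (K0.ofSub C S.1) _).trans (by rw [ofSub_cls S.1 x, K0.cls_shift])
  | add x y hx hy =>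
      obtain ⟨W₁, hW₁, h₁⟩ := hx
      obtain ⟨W₂, hW₂, h₂⟩ := hy
      refine ⟨W₁ ⊞ W₂, S.biprod_mem hW₁ hW₂, ?_⟩
      rw [map_add]; exact (map_add (K0.ofSub C S.1) _ _).trans (by rw [h₁, h₂, K0.cls_biprod])

lemma mem_of_cls_mem (S : DenseSub (C := C)) {X : C}
    (h : K0.cls C X ∈ (K0.ofSub C S.1).range) : S.1.P X := by
  obtain ⟨g, hg⟩ := h
  obtain ⟨W, hW, hval⟩ := ofSub_repr S g
  have hXW : mcls S X = mcls S W := by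
    rw [← kappa_cls S X, ← kappa_cls S W, ← hg, hval]
  obtain ⟨U, V, hU, hV, ⟨e⟩⟩ := Quotient.exact hXW
  have h1 : S.1.P (W ⊞ V) := S.biprod_mem hW hV
  have h2 : S.1.P (X ⊞ U) := ObjectProperty.prop_of_iso _ e.symm h1
  have h3 : S.1.P (U ⊞ X) := ObjectProperty.prop_of_iso _ (biprod.braiding X U) h2
  exact S.1.ext₃ _ (binaryBiproductTriangle_distinguished U X) hU h3

lemma mem_iff_cls (S : DenseSub (C := C)) (X : C) :
    S.1.P X ↔ K0.cls C X ∈ (K0.ofSub C S.1).range :=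
  ⟨fun h => ⟨QuotientAddGroup.mk' _ (FreeAbelianGroup.of ⟨X, h⟩), ofSub_cls S.1 ⟨X, h⟩⟩,
    mem_of_cls_mem S⟩

lemma Subcategory.ext_of_P {S T : Triangulated.Subcategory C} (h : S.P = T.P) : S = T := by
  cases S
  cases T
  cases h
  rfl

lemma cls_shift_mem (H : AddSubgroup (K0 C)) {X : C} (h : K0.cls C X ∈ H) (n : ℤ) :
    K0.cls C (X⟦n⟧) ∈ H := by
  induction n using Int.induction_on with
  | zero =>
      rw [K0.cls_iso C ((shiftFunctorZero C ℤ).app X)]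
      exact h
  | succ n hn =>
      rw [K0.cls_iso C ((shiftFunctorAdd' C (n : ℤ) 1 ((n : ℤ) + 1) rfl).app X)]
      simp only [Functor.comp_obj]
      rw [K0.cls_shift]
      exact neg_mem hn
  | pred n hn =>
      have e := K0.cls_iso C
        ((shiftFunctorAdd' C (-(n : ℤ) - 1) 1 (-(n : ℤ)) (by ring)).app X)
      simp only [Functor.comp_obj] at e
      rw [K0.cls_shift] at e
      rw [neg_eq_iff_eq_neg.1 e.symm]
      exact neg_mem hn

end Key

theorem stmt5 [EssentiallySmall.{v} C] :
    Function.Bijective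
      (fun S : {S : Triangulated.Subcategory C //
          ObjectProperty.IsClosedUnderIsomorphisms S.P ∧ ∀ X : C, ∃ Y : C, S.P (X ⊞ Y)} =>
        ((K0.ofSub C S.1).range : AddSubgroup (K0 C))) ∧
    ∀ (S : {S : Triangulated.Subcategory C //
        ObjectProperty.IsClosedUnderIsomorphisms S.P ∧ ∀ X : C, ∃ Y : C, S.P (X ⊞ Y)}) (X : C),
      S.1.P X ↔ K0.cls C X ∈ (K0.ofSub C S.1).range := by
  refine ⟨⟨?_, ?_⟩, fun S X => mem_iff_cls S X⟩
  · intro S₁ S₂ h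
    dsimp only at h
    refine Subtype.ext (Subcategory.ext_of_P (funext fun X => propext ?_))
    rw [mem_iff_cls S₁ X, mem_iff_cls S₂ X, h]
  · intro H
    have h0 : K0.cls C (0 : C) ∈ H := by rw [K0.cls_zero]; exact H.zero_mem
    have hsh : ∀ (X : C) (n : ℤ), K0.cls C X ∈ H → K0.cls C (X⟦n⟧) ∈ H :=
      fun X n hX => cls_shift_mem H hX n
    have hext : ∀ (T : Triangle C), (T ∈ distTriang C) → K0.cls C T.obj₁ ∈ H →
        K0.cls C T.obj₃ ∈ H → K0.cls C T.obj₂ ∈ H :=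
      fun T hT h₁ h₃ => by rw [K0.cls_eq_add C T hT]; exact H.add_mem h₁ h₃
    have hdense : ∀ X : C, ∃ Y : C,
        (Triangulated.Subcategory.mk' (fun X => K0.cls C X ∈ H) h0 hsh hext).P (X ⊞ Y) := by
      intro X
      refine ⟨X⟦(1 : ℤ)⟧, ?_⟩
      show K0.cls C (X ⊞ X⟦(1 : ℤ)⟧) ∈ H
      rw [K0.cls_biprod, K0.cls_shift, add_neg_cancel]
      exact H.zero_mem
    refine ⟨⟨Triangulated.Subcategory.mk' (fun X => K0.cls C X ∈ H) h0 hsh hext,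
      inferInstance, hdense⟩, ?_⟩
    dsimp only
    apply le_antisymm
    · rintro g ⟨x, rfl⟩
      obtain ⟨W, hW, hval⟩ := ofSub_repr
        ⟨Triangulated.Subcategory.mk' (fun X => K0.cls C X ∈ H) h0 hsh hext,
          inferInstance, hdense⟩ x
      rw [hval]
      exact hW
    · intro g hg
      obtain ⟨X, rfl⟩ := K0.cls_surjective C g
      exact ⟨QuotientAddGroup.mk' _ (FreeAbelianGroup.of ⟨X, hg⟩),
        ofSub_cls _ ⟨X, hg⟩⟩
end

section
/- A triangulated category D that admits a bounded t-structure is Karoubian (idempotent complete), i.e. every idempotent endomorphism of an object of D splits. -/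
/-!
STATEMENT 9 (Le–Chen): A triangulated category that admits a bounded t-structure is
Karoubian (idempotent complete).
-/

open CategoryTheory Limits Pretriangulated Triangulated

universe v u

variable (C : Type u) [Category.{v} C] [Preadditive C] [HasZeroObject C]
  [HasShift C ℤ] [∀ n : ℤ, (shiftFunctor C n).Additive] [Pretriangulated C]

namespace LeChen

variable {C}
variable (t : TStructure C)

lemma zero_of (n m : ℤ) (hnm : n < m) {X Y : C} (hX : t.le n X) (hY : t.ge m Y)
    (f : X ⟶ Y) : f = 0 := by
  have hX' : t.le 0 (X⟦n⟧) := t.le_shift n n 0 (by omega) X hX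
  have hY' : t.ge 1 (Y⟦n⟧) := t.ge_antitone (show (1:ℤ) ≤ m - n by omega) _
    (t.ge_shift m n (m - n) (by omega) Y hY)
  have h0 := t.zero' ((shiftFunctor C n).map f) hX' hY'
  exact (shiftFunctor C n).map_injective (by rw [h0, Functor.map_zero])

lemma le_of_orth (n : ℤ) (X : C) (h : ∀ Y : C, t.ge (n + 1) Y → ∀ f : X ⟶ Y, f = 0) :
    t.le n X := by
  obtain ⟨A, B, hA, hB, f, g, w, mem⟩ := t.exists_triangle X n (n + 1) rfl
  have hg : g = 0 := h B hB g
  obtain ⟨ρ, hρ⟩ := Triangle.yoneda_exact₃ _ mem (𝟙 B) (by simp [hg]; exact zero_comp)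
  have hρ0 : ρ = 0 := zero_of t (n - 1) (n + 1) (by omega)
    (t.le_shift n 1 (n - 1) (by omega) A hA) hB ρ
  have hzB : IsZero B := by
    rw [IsZero.iff_id_eq_zero, hρ, hρ0, comp_zero]
    exact rfl
  have : IsIso f := (Triangle.isZero₃_iff_isIso₁ _ mem).1 hzB
  exact (t.le n).prop_of_iso (asIso f) hA

lemma ge_of_orth (n : ℤ) (X : C) (h : ∀ Y : C, t.le (n - 1) Y → ∀ f : Y ⟶ X, f = 0) :
    t.ge n X := by
  obtain ⟨A, B, hA, hB, f, g, w, mem⟩ := t.exists_triangle X (n - 1) n (by omega)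
  have hf : f = 0 := h A hA f
  obtain ⟨ρ, hρ⟩ := Triangle.coyoneda_exact₂ _ (inv_rot_of_distTriang _ mem)
    (𝟙 A : A ⟶ (Triangle.mk f g w).invRotate.obj₂) (by simp [Triangle.invRotate, hf]; exact comp_zero)
  have hρ0 : ρ = 0 := zero_of t (n - 1) (n + 1) (by omega) hA
    (t.ge_shift n (-1) (n + 1) (by omega) B hB) ρ
  have hzA : IsZero A := by
    rw [IsZero.iff_id_eq_zero, hρ, hρ0, zero_comp]
    exact rfl
  have : IsIso g := (Triangle.isZero₁_iff_isIso₂ _ mem).1 hzA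
  exact (t.ge n).prop_of_iso (asIso g).symm hB

lemma le_ext (n : ℤ) (T : Triangle C) (hT : T ∈ distTriang C)
    (h₁ : t.le n T.obj₁) (h₃ : t.le n T.obj₃) : t.le n T.obj₂ :=
  le_of_orth t n _ (fun Y hY f => by
    obtain ⟨g, rfl⟩ := Triangle.yoneda_exact₂ _ hT f
      (zero_of t n (n + 1) (by omega) h₁ hY _)
    rw [zero_of t n (n + 1) (by omega) h₃ hY g, comp_zero])

lemma ge_ext (n : ℤ) (T : Triangle C) (hT : T ∈ distTriang C)
    (h₁ : t.ge n T.obj₁) (h₃ : t.ge n T.obj₃) : t.ge n T.obj₂ :=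
  ge_of_orth t n _ (fun Y hY f => by
    obtain ⟨g, rfl⟩ := Triangle.coyoneda_exact₂ _ hT f
      (zero_of t (n - 1) n (by omega) hY h₃ _)
    rw [zero_of t (n - 1) n (by omega) hY h₁ g, zero_comp])

lemma le_retract (n : ℤ) {A X : C} (i : A ⟶ X) (r : X ⟶ A) (hir : i ≫ r = 𝟙 A)
    (hX : t.le n X) : t.le n A :=
  le_of_orth t n A (fun Y hY f => by
    have h0 : r ≫ f = 0 := zero_of t n (n + 1) (by omega) hX hY _
    calc f = i ≫ r ≫ f := by rw [← Category.assoc, hir, Category.id_comp]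
    _ = 0 := by rw [h0, comp_zero])

lemma ge_retract (n : ℤ) {A X : C} (i : A ⟶ X) (r : X ⟶ A) (hir : i ≫ r = 𝟙 A)
    (hX : t.ge n X) : t.ge n A :=
  ge_of_orth t n A (fun Y hY f => by
    have h0 : f ≫ i = 0 := zero_of t (n - 1) n (by omega) hY hX _
    calc f = (f ≫ i) ≫ r := by rw [Category.assoc, hir, Category.comp_id]
    _ = 0 := by rw [h0, zero_comp])


lemma heart_split (a : ℤ) (X : C) (hX₁ : t.le a X) (hX₂ : t.ge a X)
    (e : X ⟶ X) (he : e ≫ e = e) :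
    ∃ (Y : C) (i : Y ⟶ X) (r : X ⟶ Y), i ≫ r = 𝟙 Y ∧ r ≫ i = e := by
  obtain ⟨Z, p, q, hT⟩ := distinguished_cocone_triangle (𝟙 X - e)
  obtain ⟨s, hs⟩ := Triangle.yoneda_exact₂ _ hT e
    (by show (𝟙 X - e) ≫ e = 0; rw [Preadditive.sub_comp, Category.id_comp, he, sub_self])
  change Z ⟶ X at s; change e = p ≫ s at hs
  -- hs : e = p ≫ s
  have hep : e ≫ p = p := by
    have h0 := comp_distTriang_mor_zero₁₂ _ hT
    change (𝟙 X - e) ≫ p = 0 at h0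
    rw [Preadditive.sub_comp, Category.id_comp, sub_eq_zero] at h0
    exact h0.symm
  obtain ⟨K, A, hK, hA, j, π, δ, hT₂⟩ := t.exists_triangle Z (a - 1) a (by omega)
  have hjs : j ≫ s = 0 := zero_of t (a - 1) a (by omega) hK hX₂ _
  obtain ⟨σ, hσ⟩ := Triangle.yoneda_exact₂ _ hT₂ s hjs
  change A ⟶ X at σ; change s = π ≫ σ at hσ
  -- hσ : s = π ≫ σ
  have hpt : p ≫ (𝟙 Z - s ≫ p) = 0 := by
    rw [Preadditive.comp_sub, Category.comp_id, ← Category.assoc, ← hs, hep, sub_self]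
  obtain ⟨g, hg⟩ := Triangle.yoneda_exact₃ _ hT _ hpt
  change X⟦(1 : ℤ)⟧ ⟶ Z at g; change 𝟙 Z - s ≫ p = q ≫ g at hg
  -- hg : 𝟙 Z - s ≫ p = q ≫ g
  have hgπ : g ≫ π = 0 := zero_of t (a - 1) a (by omega)
    (t.le_shift a 1 (a - 1) (by omega) X hX₁) hA _
  have htπ : (s ≫ p) ≫ π = π := by
    have h1 : (𝟙 Z - s ≫ p) ≫ π = 0 := by
      rw [hg, Category.assoc, hgπ, comp_zero]
    rw [Preadditive.sub_comp, Category.id_comp, sub_eq_zero] at h1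
    exact h1.symm
  have hπα : π ≫ (σ ≫ p ≫ π) = π := by
    calc π ≫ (σ ≫ p ≫ π) = ((π ≫ σ) ≫ p) ≫ π := by simp only [Category.assoc]
    _ = (s ≫ p) ≫ π := by rw [← hσ]
    _ = π := htπ
  have hα : σ ≫ p ≫ π = 𝟙 A := by
    have h0 : π ≫ (σ ≫ p ≫ π - 𝟙 A) = 0 := by
      rw [Preadditive.comp_sub, Category.comp_id, hπα, sub_self]
    obtain ⟨k, hk⟩ := Triangle.yoneda_exact₃ _ hT₂ _ h0
    change σ ≫ p ≫ π - 𝟙 A = δ ≫ k at hk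
    rw [zero_of t (a - 2) a (by omega)
      (t.le_shift (a - 1) 1 (a - 2) (by omega) K hK) hA k, comp_zero, sub_eq_zero] at hk
    exact hk
  refine ⟨A, σ, p ≫ π, hα, ?_⟩
  rw [Category.assoc, ← hσ, ← hs]


lemma split_induction (n : ℕ) : ∀ (a b : ℤ), b ≤ a + n → ∀ (X : C), t.ge a X → t.le b X →
    ∀ e : X ⟶ X, e ≫ e = e →
    ∃ (Y : C) (i : Y ⟶ X) (r : X ⟶ Y), i ≫ r = 𝟙 Y ∧ r ≫ i = e := by
  induction n with
  | zero =>
    intro a b hab X hGE hLE e he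
    rcases eq_or_lt_of_le hab with hba | hba
    · refine heart_split t a X ?_ hGE e he
      simp only [Nat.cast_zero, add_zero] at hba
      exact hba ▸ hLE
    · have hid : 𝟙 X = 0 := zero_of t b (b + 1) (by omega) hLE
        (t.ge_antitone (show b + 1 ≤ a by simp at hba; omega) _ hGE) (𝟙 X)
      have he0 : e = 0 := by rw [← Category.comp_id e, hid, comp_zero]
      exact ⟨X, 𝟙 X, 𝟙 X, by simp, by rw [Category.id_comp, hid, he0]⟩
  | succ n ih =>
    intro a b hab X hGE hLE e he
    by_cases hba : b ≤ a + n
    · exact ih a b hba X hGE hLE e he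
    have hb : a < b := by push_cast at hab hba ⊢; omega
    -- truncation triangle
    obtain ⟨X₁, X₂, h₁, h₂, u, v, w, hT⟩ := t.exists_triangle X a (a + 1) rfl
    have h₁' : t.ge a X₁ := by
      exact ge_ext t a _ (inv_rot_of_distTriang _ hT)
        (t.ge_antitone (show a ≤ a + 2 by omega) _
          (t.ge_shift (a + 1) (-1) (a + 2) (by omega) X₂ h₂)) hGE
    have h₂' : t.le b X₂ := by
      exact le_ext t b _ (rot_of_distTriang _ hT) hLE
        (t.le_monotone (show a - 1 ≤ b by omega) _
          (t.le_shift a 1 (a - 1) (by omega) X₁ h₁))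
    -- induced idempotents
    obtain ⟨e₂, he₂⟩ := Triangle.yoneda_exact₂ _ hT (e ≫ v)
      (by show u ≫ e ≫ v = 0; rw [← Category.assoc]; exact zero_of t a (a + 1) (by omega) h₁ h₂ _)
    change X₂ ⟶ X₂ at e₂; change e ≫ v = v ≫ e₂ at he₂
    have uniq₂ : ∀ c c' : X₂ ⟶ X₂, v ≫ c = v ≫ c' → c = c' := by
      intro c c' hcc
      have h0 : v ≫ (c - c') = 0 := by
        rw [Preadditive.comp_sub, hcc, sub_self]
      obtain ⟨k, hk⟩ := Triangle.yoneda_exact₃ _ hT _ h0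
      change X₁⟦(1 : ℤ)⟧ ⟶ X₂ at k; change c - c' = w ≫ k at hk
      rw [zero_of t (a - 1) (a + 1) (by omega)
        (t.le_shift a 1 (a - 1) (by omega) X₁ h₁) h₂ k, comp_zero, sub_eq_zero] at hk
      exact hk
    have he₂idem : e₂ ≫ e₂ = e₂ := by
      refine uniq₂ _ _ ?_
      calc v ≫ e₂ ≫ e₂ = (v ≫ e₂) ≫ e₂ := by rw [Category.assoc]
      _ = (e ≫ v) ≫ e₂ := by rw [← he₂]
      _ = e ≫ (v ≫ e₂) := by rw [Category.assoc]
      _ = e ≫ (e ≫ v) := by rw [← he₂]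
      _ = (e ≫ e) ≫ v := by simp only [Category.assoc]
      _ = e ≫ v := by rw [he]
      _ = v ≫ e₂ := he₂
    obtain ⟨e₁, he₁⟩ := Triangle.coyoneda_exact₂ _ hT (u ≫ e)
      (by show (u ≫ e) ≫ v = 0; rw [Category.assoc]; exact zero_of t a (a + 1) (by omega) h₁ h₂ _)
    change X₁ ⟶ X₁ at e₁; change u ≫ e = e₁ ≫ u at he₁
    have uniq₁ : ∀ c c' : X₁ ⟶ X₁, c ≫ u = c' ≫ u → c = c' := by
      intro c c' hcc
      have h0 : (c - c') ≫ (Triangle.mk u v w).invRotate.mor₂ = 0 := by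
        show (c - c') ≫ u = 0
        rw [Preadditive.sub_comp, hcc, sub_self]
      obtain ⟨k, hk⟩ := Triangle.coyoneda_exact₂ _ (inv_rot_of_distTriang _ hT) _ h0
      change X₁ ⟶ X₂⟦(-1 : ℤ)⟧ at k; obtain ⟨μ, hk⟩ : ∃ μ : X₂⟦(-1 : ℤ)⟧ ⟶ X₁, c - c' = k ≫ μ := ⟨_, hk⟩
      rw [zero_of t a (a + 2) (by omega) h₁
        (t.ge_shift (a + 1) (-1) (a + 2) (by omega) X₂ h₂) k, zero_comp, sub_eq_zero] at hk
      exact hk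
    have he₁idem : e₁ ≫ e₁ = e₁ := by
      refine uniq₁ _ _ ?_
      calc (e₁ ≫ e₁) ≫ u = e₁ ≫ (e₁ ≫ u) := by rw [Category.assoc]
      _ = e₁ ≫ (u ≫ e) := by rw [← he₁]
      _ = (e₁ ≫ u) ≫ e := by simp only [Category.assoc]
      _ = (u ≫ e) ≫ e := by rw [← he₁]
      _ = u ≫ (e ≫ e) := by rw [Category.assoc]
      _ = u ≫ e := by rw [he]
      _ = e₁ ≫ u := he₁
    -- third square
    obtain ⟨c, hc₁, hc₂⟩ := complete_distinguished_triangle_morphism _ _ hT hT e₁ e he₁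
    change X₂ ⟶ X₂ at c; change v ≫ c = e ≫ v at hc₁; change w ≫ e₁⟦(1 : ℤ)⟧' = c ≫ w at hc₂
    have hc : c = e₂ := uniq₂ _ _ (by rw [hc₁, he₂])
    rw [hc] at hc₂
    -- split the two pieces
    obtain ⟨A₁, i₁, r₁, hi₁, hr₁⟩ := heart_split t a X₁ h₁ h₁' e₁ he₁idem
    obtain ⟨A₂, i₂, r₂, hi₂, hr₂⟩ := ih (a + 1) b (by push_cast at hab ⊢; omega) X₂ h₂ h₂' e₂ he₂idem
    have hA₁le : t.le a A₁ := le_retract t a i₁ r₁ hi₁ h₁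
    have hA₂ge : t.ge (a + 1) A₂ := ge_retract t (a + 1) i₂ r₂ hi₂ h₂
    -- glued triangle
    obtain ⟨Y, u', v', hT'⟩ := distinguished_cocone_triangle₂ (i₂ ≫ w ≫ r₁⟦(1 : ℤ)⟧')
    -- φ : Y ⟶ X
    obtain ⟨φ, hφ₁, hφ₂⟩ := complete_distinguished_triangle_morphism₂ _ _ hT' hT i₁ i₂ (by
      show (i₂ ≫ w ≫ r₁⟦(1 : ℤ)⟧') ≫ i₁⟦(1 : ℤ)⟧' = i₂ ≫ w
      calc (i₂ ≫ w ≫ r₁⟦(1 : ℤ)⟧') ≫ i₁⟦(1 : ℤ)⟧'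
          = i₂ ≫ w ≫ (r₁ ≫ i₁)⟦(1 : ℤ)⟧' := by
            rw [Functor.map_comp]; simp only [Category.assoc]
      _ = i₂ ≫ e₂ ≫ w := by rw [hr₁, hc₂]
      _ = (i₂ ≫ r₂) ≫ i₂ ≫ w := by rw [← hr₂]; simp only [Category.assoc]
      _ = i₂ ≫ w := by rw [hi₂, Category.id_comp])
    change Y ⟶ X at φ; change u' ≫ φ = i₁ ≫ u at hφ₁; change v' ≫ i₂ = φ ≫ v at hφ₂
    -- ψ : X ⟶ Y
    obtain ⟨ψ, hψ₁, hψ₂⟩ := complete_distinguished_triangle_morphism₂ _ _ hT hT' r₁ r₂ (by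
      show w ≫ r₁⟦(1 : ℤ)⟧' = r₂ ≫ i₂ ≫ w ≫ r₁⟦(1 : ℤ)⟧'
      calc w ≫ r₁⟦(1 : ℤ)⟧'
          = w ≫ (e₁ ≫ r₁)⟦(1 : ℤ)⟧' := by
            rw [show e₁ ≫ r₁ = r₁ by rw [← hr₁, Category.assoc, hi₁, Category.comp_id]]
      _ = (w ≫ e₁⟦(1 : ℤ)⟧') ≫ r₁⟦(1 : ℤ)⟧' := by rw [Functor.map_comp]; simp only [Category.assoc]
      _ = (e₂ ≫ w) ≫ r₁⟦(1 : ℤ)⟧' := by rw [hc₂]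
      _ = r₂ ≫ i₂ ≫ w ≫ r₁⟦(1 : ℤ)⟧' := by rw [← hr₂]; simp only [Category.assoc])
    change X ⟶ Y at ψ; change u ≫ ψ = r₁ ≫ u' at hψ₁; change v ≫ r₂ = ψ ≫ v' at hψ₂
    -- hφ₁ : u' ≫ φ = i₁ ≫ u, hφ₂ : v' ≫ i₂ = φ ≫ v
    -- hψ₁ : u ≫ ψ = r₁ ≫ u', hψ₂ : v ≫ r₂ = ψ ≫ v'
    have huv' : u' ≫ v' = 0 := comp_distTriang_mor_zero₁₂ _ hT'
    have huv : u ≫ v = 0 := comp_distTriang_mor_zero₁₂ _ hT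
    -- the error term g₀ on Y
    have hfg₁ : u' ≫ (φ ≫ ψ - 𝟙 Y) = 0 := by
      rw [Preadditive.comp_sub, Category.comp_id, ← Category.assoc, hφ₁, Category.assoc,
        hψ₁, ← Category.assoc, hi₁, Category.id_comp, sub_self]
    obtain ⟨h, hh⟩ := Triangle.yoneda_exact₂ _ hT' _ hfg₁
    change A₂ ⟶ Y at h; change φ ≫ ψ - 𝟙 Y = v' ≫ h at hh
    have hgv : (φ ≫ ψ - 𝟙 Y) ≫ v' = 0 := by
      rw [Preadditive.sub_comp, Category.id_comp, Category.assoc, ← hψ₂, ← Category.assoc,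
        ← hφ₂, Category.assoc, hi₂, Category.comp_id, sub_self]
    have hhv : h ≫ v' = 0 := by
      have h0 : v' ≫ (h ≫ v') = 0 := by rw [← Category.assoc, ← hh]; exact hgv
      obtain ⟨k, hk⟩ := Triangle.yoneda_exact₃ _ hT' _ h0
      change A₁⟦(1 : ℤ)⟧ ⟶ A₂ at k; change h ≫ v' = (i₂ ≫ w ≫ r₁⟦(1 : ℤ)⟧') ≫ k at hk
      rw [zero_of t (a - 1) (a + 1) (by omega)
        (t.le_shift a 1 (a - 1) (by omega) A₁ hA₁le) hA₂ge k, comp_zero] at hk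
      exact hk
    obtain ⟨h₀, hh₀⟩ := Triangle.coyoneda_exact₂ _ hT' h hhv
    change A₂ ⟶ A₁ at h₀; change h = h₀ ≫ u' at hh₀
    obtain ⟨g₀, hg₀def⟩ : ∃ g₀ : Y ⟶ Y, g₀ = φ ≫ ψ - 𝟙 Y := ⟨_, rfl⟩
    have hg₀ : g₀ = v' ≫ h₀ ≫ u' := by rw [hg₀def, hh, hh₀]
    have hg₀g₀ : g₀ ≫ g₀ = 0 := by
      calc g₀ ≫ g₀ = (v' ≫ h₀) ≫ (u' ≫ v') ≫ (h₀ ≫ u') := by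
            rw [hg₀]; simp only [Category.assoc]
      _ = 0 := by rw [huv', zero_comp, comp_zero]
    -- the error term d on X
    have hdu : u ≫ (ψ ≫ φ - e) = 0 := by
      rw [Preadditive.comp_sub, ← Category.assoc, hψ₁, Category.assoc, hφ₁,
        ← Category.assoc, hr₁, ← he₁, sub_self]
    obtain ⟨m, hm⟩ := Triangle.yoneda_exact₂ _ hT _ hdu
    change X₂ ⟶ X at m; change ψ ≫ φ - e = v ≫ m at hm
    have hdv : (ψ ≫ φ - e) ≫ v = 0 := by
      rw [Preadditive.sub_comp, Category.assoc, ← hφ₂, ← Category.assoc, ← hψ₂,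
        Category.assoc, hr₂, ← he₂, sub_self]
    have hmv : m ≫ v = 0 := by
      have h0 : v ≫ (m ≫ v) = 0 := by rw [← Category.assoc, ← hm]; exact hdv
      obtain ⟨k, hk⟩ := Triangle.yoneda_exact₃ _ hT _ h0
      change X₁⟦(1 : ℤ)⟧ ⟶ X₂ at k; change m ≫ v = w ≫ k at hk
      rw [zero_of t (a - 1) (a + 1) (by omega)
        (t.le_shift a 1 (a - 1) (by omega) X₁ h₁) h₂ k, comp_zero] at hk
      exact hk
    obtain ⟨m₀, hm₀⟩ := Triangle.coyoneda_exact₂ _ hT m hmv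
    change X₂ ⟶ X₁ at m₀; change m = m₀ ≫ u at hm₀
    -- the corrected section ψ'
    obtain ⟨ψ', hψ'def⟩ : ∃ ψ'' : X ⟶ Y, ψ'' = ψ ≫ (𝟙 Y - g₀) := ⟨_, rfl⟩
    have hφψ : φ ≫ ψ = 𝟙 Y + g₀ := by rw [hg₀def]; abel
    have hφψ' : φ ≫ ψ' = 𝟙 Y := by
      rw [hψ'def, ← Category.assoc, hφψ]
      simp only [Preadditive.comp_sub, Preadditive.add_comp, Category.id_comp,
        Category.comp_id, hg₀g₀]
      abel
    -- z
    obtain ⟨z, hzdef⟩ : ∃ z' : X ⟶ X, z' = v ≫ (m₀ - r₂ ≫ h₀ ≫ i₁) ≫ u := ⟨_, rfl⟩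
    have hψφ : ψ ≫ φ = e + v ≫ m₀ ≫ u := by
      rw [hm₀] at hm
      rw [sub_eq_iff_eq_add] at hm
      rw [hm]; abel
    have hψgφ : ψ ≫ g₀ ≫ φ = v ≫ (r₂ ≫ h₀ ≫ i₁) ≫ u := by
      rw [hg₀]
      calc ψ ≫ (v' ≫ h₀ ≫ u') ≫ φ = (ψ ≫ v') ≫ h₀ ≫ (u' ≫ φ) := by
            simp only [Category.assoc]
      _ = (v ≫ r₂) ≫ h₀ ≫ (i₁ ≫ u) := by rw [← hψ₂, hφ₁]
      _ = v ≫ (r₂ ≫ h₀ ≫ i₁) ≫ u := by simp only [Category.assoc]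
    have hp : ψ' ≫ φ = e + z := by
      rw [hψ'def]
      calc (ψ ≫ (𝟙 Y - g₀)) ≫ φ = ψ ≫ φ - ψ ≫ g₀ ≫ φ := by
            simp only [Preadditive.comp_sub, Preadditive.sub_comp, Category.comp_id,
              Category.id_comp, Category.assoc]
      _ = (e + v ≫ m₀ ≫ u) - v ≫ (r₂ ≫ h₀ ≫ i₁) ≫ u := by rw [hψφ, hψgφ]
      _ = e + z := by
            rw [hzdef]
            simp only [Preadditive.sub_comp, Preadditive.comp_sub]
            abel
    have hz2 : z ≫ z = 0 := by
      calc z ≫ z = (v ≫ (m₀ - r₂ ≫ h₀ ≫ i₁)) ≫ (u ≫ v) ≫ ((m₀ - r₂ ≫ h₀ ≫ i₁) ≫ u) := by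
            rw [hzdef]; simp only [Category.assoc]
      _ = 0 := by rw [huv, zero_comp, comp_zero]
    have hpid : (e + z) ≫ (e + z) = e + z := by
      rw [← hp]
      calc (ψ' ≫ φ) ≫ ψ' ≫ φ = ψ' ≫ (φ ≫ ψ') ≫ φ := by simp only [Category.assoc]
      _ = ψ' ≫ φ := by rw [hφψ', Category.id_comp]
    have hez : e ≫ z + z ≫ e = z := by
      simp only [Preadditive.add_comp, Preadditive.comp_add] at hpid
      rw [he, hz2, add_zero] at hpid
      have h' : e + (e ≫ z + z ≫ e) = e + z := by rw [← hpid]; abel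
      exact add_left_cancel h'
    have heze : e ≫ z ≫ e = 0 := by
      have h8 : e ≫ (e ≫ z + z ≫ e) = e ≫ z := by rw [hez]
      rw [Preadditive.comp_add, ← Category.assoc, he] at h8
      exact add_eq_left.mp h8
    have hzez : z ≫ e ≫ z = 0 := by
      have h9 : (e ≫ z + z ≫ e) ≫ z = z ≫ z := by rw [hez]
      rw [hz2, Preadditive.add_comp, Category.assoc, Category.assoc, hz2, comp_zero,
        zero_add] at h9
      exact h9
    -- the conjugating element
    obtain ⟨nn, hnndef⟩ : ∃ nn : X ⟶ X, nn = e ≫ z + e ≫ z - z := ⟨_, rfl⟩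
    have heez : e ≫ e ≫ z = e ≫ z := by rw [← Category.assoc, he]
    have hezez : e ≫ z ≫ e ≫ z = 0 := by rw [hzez, comp_zero]
    have hezz : e ≫ z ≫ z = 0 := by rw [hz2, comp_zero]
    have hnn2 : nn ≫ nn = 0 := by
      rw [hnndef]
      simp only [Preadditive.sub_comp, Preadditive.comp_sub, Preadditive.add_comp,
        Preadditive.comp_add, Category.assoc, hz2, hzez, hezez, hezz, comp_zero,
        sub_zero, zero_sub, add_zero, zero_add, sub_self]
      try abel
    have hmid : (𝟙 X - nn) ≫ (𝟙 X + nn) = 𝟙 X := by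
      simp only [Preadditive.sub_comp, Preadditive.comp_add, Category.id_comp,
        Category.comp_id, hnn2]
      abel
    have hmid' : (𝟙 X + nn) ≫ (𝟙 X - nn) = 𝟙 X := by
      simp only [Preadditive.add_comp, Preadditive.comp_sub, Category.id_comp,
        Category.comp_id, hnn2]
      abel
    have hkey : (𝟙 X + nn) ≫ (e + z) = e ≫ (𝟙 X + nn) := by
      have h' : e ≫ z = z - z ≫ e := eq_sub_of_add_eq hez
      rw [hnndef]
      simp only [Preadditive.add_comp, Preadditive.comp_add, Preadditive.sub_comp,
        Preadditive.comp_sub, Category.id_comp, Category.comp_id, Category.assoc,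
        heez, heze, hz2, hzez, hezz, comp_zero, zero_comp, sub_zero, add_zero, zero_add]
      rw [h']
      try abel
    refine ⟨Y, φ ≫ (𝟙 X - nn), (𝟙 X + nn) ≫ ψ', ?_, ?_⟩
    · calc (φ ≫ (𝟙 X - nn)) ≫ (𝟙 X + nn) ≫ ψ'
          = φ ≫ ((𝟙 X - nn) ≫ (𝟙 X + nn)) ≫ ψ' := by simp only [Category.assoc]
      _ = 𝟙 Y := by rw [hmid, Category.id_comp, hφψ']
    · calc ((𝟙 X + nn) ≫ ψ') ≫ φ ≫ (𝟙 X - nn)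
          = (𝟙 X + nn) ≫ (ψ' ≫ φ) ≫ (𝟙 X - nn) := by simp only [Category.assoc]
      _ = ((𝟙 X + nn) ≫ (e + z)) ≫ (𝟙 X - nn) := by rw [hp]; simp only [Category.assoc]
      _ = (e ≫ (𝟙 X + nn)) ≫ (𝟙 X - nn) := by rw [hkey]
      _ = e := by rw [Category.assoc, hmid', Category.comp_id]

end LeChen

theorem stmt9 (t : TStructure C)
    (hbounded : ∀ X : C, ∃ n : ℕ, t.le n X ∧ t.ge (-(n : ℤ)) X) :
    IsIdempotentComplete C := by
  refine ⟨fun X p hp => ?_⟩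
  obtain ⟨n, hLE, hGE⟩ := hbounded X
  exact LeChen.split_induction t (2 * n) (-(n : ℤ)) (n : ℤ)
    (by push_cast; omega) X hGE hLE p hp
end

section
/- Let D be a Karoubian (idempotent complete) triangulated category and D_0 ⊂ D a dense strictly full triangulated subcategory. If D_0 is itself Karoubian, then D_0 = D. -/
/-!
STATEMENT 10: Let D be a Karoubian triangulated category and D₀ ⊂ D a dense strictly
full triangulated subcategory. If D₀ is itself Karoubian, then D₀ = D.
-/

open CategoryTheory Limits Pretriangulated

universe v u

variable (C : Type u) [Category.{v} C] [Preadditive C] [HasZeroObject C]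
  [HasShift C ℤ] [∀ n : ℤ, (shiftFunctor C n).Additive] [Pretriangulated C]

theorem stmt10 [IsIdempotentComplete C]
    (D₀ : ObjectProperty C) [D₀.IsTriangulated] [D₀.IsClosedUnderIsomorphisms]
    (hdense : ∀ X : C, ∃ Y : C, D₀ (X ⊞ Y))
    (hkaroubian : IsIdempotentComplete D₀.FullSubcategory) :
    ∀ X : C, D₀ X := by
  intro X
  obtain ⟨Y, hY⟩ := hdense X
  -- the idempotent projecting onto X, viewed in the full subcategory
  let A : D₀.FullSubcategory := ⟨X ⊞ Y, hY⟩
  let p : A ⟶ A := ObjectProperty.homMk (biprod.fst ≫ biprod.inl : X ⊞ Y ⟶ X ⊞ Y)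
  have hp : p ≫ p = p := by
    apply ObjectProperty.hom_ext
    show (biprod.fst ≫ biprod.inl : X ⊞ Y ⟶ X ⊞ Y) ≫ _ = _
    simp [p]
  obtain ⟨Z, i, r, hir, hri⟩ := hkaroubian.idempotents_split A p hp
  have hir' : (i.hom ≫ r.hom : Z.obj ⟶ Z.obj) = 𝟙 Z.obj := congrArg InducedCategory.Hom.hom hir
  have hri' : (r.hom ≫ i.hom : X ⊞ Y ⟶ X ⊞ Y) = biprod.fst ≫ biprod.inl := congrArg (fun f : A ⟶ A => f.hom) hri
  have : X ≅ Z.obj := by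
    refine ⟨biprod.inl ≫ r.hom, i.hom ≫ biprod.fst, ?_, ?_⟩
    · slice_lhs 2 3 => rw [hri']
      simp
    · rw [Category.assoc]
      slice_lhs 2 3 => rw [← hri']
      slice_lhs 1 2 => rw [hir']
      simp [hir']
  exact D₀.prop_of_iso this.symm Z.property
end
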